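/- Let Π_n be the Fourier truncation onto frequencies 0 ≤ k < n on the Hardy space L²₊ of the torus, and R₀(κ) = (-i∂_x + κ)^{-1} on L²₊. For any u ∈ L²(T), any 1 ≤ n ≤ ∞ and any κ ≥ 1, the operator f ↦ u·(Π_n R₀(κ) f) is bounded on L² with operator norm at most √3 · κ^{-1/2} · ‖u‖_{L²}. -/

import Mathlib

open scoped ComplexConjugate ENNReal NNReal
open MeasureTheory

noncomputable section

/-- The squared-summed `ℓ²` norm of a sequence of Fourier coefficients
(`= L²` norm of the corresponding function on the torus, by Plancherel). -/
def l2norm {ι : Type*} (a : ι → ℂ) : ℝ := Real.sqrt (∑' k, ‖a k‖ ^ 2)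

/-- The Fourier truncation `Π_n` onto frequencies `0 ≤ k < n` (with `Π_∞ = Π`),
acting on Hardy-space Fourier coefficients. -/
def trunc (n : ℕ∞) (a : ℕ → ℂ) : ℕ → ℂ := fun k => if (k : ℕ∞) < n then a k else 0

/-- The free resolvent `R₀(κ) = (-i∂ₓ + κ)⁻¹` on the Hardy space, as the Fourier
multiplier with symbol `1/(k+κ)`. -/
def res (κ : ℝ) (a : ℕ → ℂ) : ℕ → ℂ := fun k => a k / ((k : ℂ) + κ)

/-- Fourier coefficients of the product `u · b` of a general `L²(𝕋)` function `u`
(coefficients indexed by `ℤ`) with a Hardy-space function `b`. -/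
def mulZ (u : ℤ → ℂ) (b : ℕ → ℂ) : ℤ → ℂ := fun k => ∑' l : ℕ, u (k - (l : ℤ)) * b l

/-- Fourier coefficients of the product `u · b` of two Hardy-space functions. -/
def mulH (u b : ℕ → ℂ) : ℕ → ℂ :=
  fun k => (Finset.range (k + 1)).sum fun l => u (k - l) * b l

/-- Nonnegative Fourier coefficients of the product `conj u · b` for Hardy-space
functions `u, b`: `(ū·b)^(k) = ∑_{l≥0} conj(û(l)) b̂(l+k)` for `k ≥ 0`. -/
def mulConjH (u b : ℕ → ℂ) : ℕ → ℂ := fun k => ∑' l : ℕ, conj (u l) * b (l + k)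

lemma cs_tsum {ι : Type*} [Countable ι] (a b : ι → ℝ≥0∞) :
    (∑' i, a i * b i) ^ 2 ≤ (∑' i, (a i) ^ 2) * (∑' i, (b i) ^ 2) := by
  letI : MeasurableSpace ι := ⊤
  have hA : AEMeasurable a (Measure.count : Measure ι) := measurable_from_top.aemeasurable
  have hB : AEMeasurable b (Measure.count : Measure ι) := measurable_from_top.aemeasurable
  have h := ENNReal.lintegral_mul_le_Lp_mul_Lq (Measure.count : Measure ι)
    (by constructor <;> norm_num : (2:ℝ).HolderConjugate 2) hA hB
  rw [lintegral_count, lintegral_count, lintegral_count] at h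
  calc (∑' i, a i * b i) ^ 2
      ≤ (((∑' i, a i ^ (2:ℝ)) ^ (1/(2:ℝ))) * ((∑' i, b i ^ (2:ℝ)) ^ (1/(2:ℝ)))) ^ 2 := by
        gcongr
        simpa using h
    _ = (∑' i, (a i) ^ 2) * (∑' i, (b i) ^ 2) := by
        rw [mul_pow, ← ENNReal.rpow_natCast _ 2, ← ENNReal.rpow_natCast _ 2,
          ← ENNReal.rpow_mul, ← ENNReal.rpow_mul]
        norm_num

lemma ofReal_norm_eq_coe_nnnorm {E : Type*} [SeminormedAddGroup E] (a : E) :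
    ENNReal.ofReal ‖a‖ = (‖a‖₊ : ℝ≥0∞) := ofReal_norm a

lemma rpow_half_sq (x : ℝ≥0∞) : (x ^ ((1:ℝ)/2)) ^ 2 = x := by
  rw [← ENNReal.rpow_natCast _ 2, ← ENNReal.rpow_mul]; norm_num

/-!
STATEMENT 1 (Lemma 4.1): For any `u ∈ L²(𝕋)`, `1 ≤ n ≤ ∞` and `κ ≥ 1`, the operator
`f ↦ u · (Π_n R₀(κ) f)` is bounded on `L²` with operator norm at most `√3 κ^{-1/2} ‖u‖_{L²}`,
stated on the Fourier side (Plancherel).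
-/
theorem stmt1 (u : ℤ → ℂ) (hu : Summable fun k : ℤ => ‖u k‖ ^ 2)
    (n : ℕ∞) (hn : 1 ≤ n) (κ : ℝ) (hκ : 1 ≤ κ)
    (f : ℕ → ℂ) (hf : Summable fun k : ℕ => ‖f k‖ ^ 2) :
    l2norm (mulZ u (trunc n (res κ f))) ≤
      Real.sqrt 3 * κ ^ (-(1 : ℝ) / 2) * l2norm u * l2norm f := by
  have hκ0 : (0:ℝ) < κ := lt_of_lt_of_le one_pos hκ
  set b : ℕ → ℂ := trunc n (res κ f) with hbdef
  set U : ℤ → ℝ≥0∞ := fun k => (‖u k‖₊ : ℝ≥0∞) with hUdef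
  set F : ℕ → ℝ≥0∞ := fun k => (‖f k‖₊ : ℝ≥0∞) with hFdef
  set B : ℕ → ℝ≥0∞ := fun k => (‖b k‖₊ : ℝ≥0∞) with hBdef
  set G : ℕ → ℝ≥0∞ := fun k => ENNReal.ofReal (1/((k:ℝ)+κ)) with hGdef
  have hkκ : ∀ k : ℕ, (0:ℝ) < (k:ℝ) + κ := fun k => by positivity
  -- the real series ∑ 1/(k+κ)² is summable with sum ≤ 2/κ
  have hptle : ∀ N : ℕ, (Finset.range N).sum (fun k => (1/((k:ℝ)+κ))^2) ≤ 2/κ := by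
    intro N
    have h1 : ∀ k : ℕ, (1/((k:ℝ)+κ))^2 ≤ 2 * (1/((k:ℝ)+κ) - 1/((k+1:ℝ)+κ)) := by
      intro k
      have h2 : (1:ℝ)/((k:ℝ)+κ) - 1/((k+1:ℝ)+κ) = 1/(((k:ℝ)+κ)*((k+1:ℝ)+κ)) := by
        field_simp
        ring
      rw [h2, div_pow, one_pow, mul_one_div, div_le_div_iff₀ (by positivity) (by positivity)]
      nlinarith [hkκ k]
    calc (Finset.range N).sum (fun k => (1/((k:ℝ)+κ))^2)
        ≤ (Finset.range N).sum (fun k => 2 * ((fun k : ℕ => 1/((k:ℝ)+κ)) k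
            - (fun k : ℕ => 1/((k:ℝ)+κ)) (k+1))) := by
          apply Finset.sum_le_sum; intro k _
          simpa using h1 k
      _ = 2 * (1/((0:ℝ)+κ) - 1/((N:ℝ)+κ)) := by
          rw [← Finset.mul_sum, Finset.sum_range_sub' (fun k : ℕ => 1/((k:ℝ)+κ)) N]
          norm_num
      _ ≤ 2/κ := by
          have := hkκ N
          rw [zero_add]
          have h3 : (0:ℝ) ≤ 1/((N:ℝ)+κ) := by positivity
          calc 2 * (1/κ - 1/((N:ℝ)+κ)) ≤ 2 * (1/κ) := by nlinarith
            _ = 2/κ := by ring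
  have hGnn : ∀ k : ℕ, (0:ℝ) ≤ (1/((k:ℝ)+κ))^2 := fun k => sq_nonneg _
  have hGsum : Summable (fun k : ℕ => (1/((k:ℝ)+κ))^2) := summable_of_sum_range_le hGnn hptle
  have hGle : ∑' k : ℕ, (1/((k:ℝ)+κ))^2 ≤ 2/κ := Real.tsum_le_of_sum_range_le hGnn hptle
  -- basic ENNReal sum identifications
  have hUeq : ∀ k : ℤ, (U k)^2 = ENNReal.ofReal (‖u k‖^2) := fun k => by
    simp only [hUdef]
    rw [← ofReal_norm_eq_coe_nnnorm, ← ENNReal.ofReal_pow (norm_nonneg _)]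
  have hFeq : ∀ k : ℕ, (F k)^2 = ENNReal.ofReal (‖f k‖^2) := fun k => by
    simp only [hFdef]
    rw [← ofReal_norm_eq_coe_nnnorm, ← ENNReal.ofReal_pow (norm_nonneg _)]
  have hUsum : ∑' k, (U k)^2 = ENNReal.ofReal (∑' k, ‖u k‖^2) := by
    rw [ENNReal.ofReal_tsum_of_nonneg (fun _ => sq_nonneg _) hu]
    exact tsum_congr hUeq
  have hFsum : ∑' k, (F k)^2 = ENNReal.ofReal (∑' k, ‖f k‖^2) := by
    rw [ENNReal.ofReal_tsum_of_nonneg (fun _ => sq_nonneg _) hf]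
    exact tsum_congr hFeq
  have hG2 : ∑' k, (G k)^2 = ENNReal.ofReal (∑' k : ℕ, (1/((k:ℝ)+κ))^2) := by
    rw [ENNReal.ofReal_tsum_of_nonneg hGnn hGsum]
    refine tsum_congr fun k => ?_
    rw [← ENNReal.ofReal_pow (by positivity)]
  -- pointwise bound on B
  have hBle : ∀ k : ℕ, B k ≤ F k * G k := by
    intro k
    have hnorm : ‖b k‖ ≤ ‖f k‖ * (1/((k:ℝ)+κ)) := by
      rw [hbdef]
      unfold trunc res
      by_cases h : (k : ℕ∞) < n
      · simp only [h, if_true]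
        have hc : ((k:ℂ) + (κ:ℂ)) = ((((k:ℝ)+κ : ℝ)) : ℂ) := by push_cast; ring
        rw [norm_div, hc, Complex.norm_real, Real.norm_eq_abs, abs_of_pos (hkκ k)]
        rw [div_eq_mul_one_div]
      · simp [h]
        positivity
    calc B k = ENNReal.ofReal ‖b k‖ := (ofReal_norm_eq_coe_nnnorm _).symm
      _ ≤ ENNReal.ofReal (‖f k‖ * (1/((k:ℝ)+κ))) := ENNReal.ofReal_le_ofReal hnorm
      _ = F k * G k := by
          rw [ENNReal.ofReal_mul (norm_nonneg _), ofReal_norm_eq_coe_nnnorm]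
  -- bound on ∑ B
  have hSB2 : (∑' k, B k)^2 ≤ (∑' k, (F k)^2) * (∑' k, (G k)^2) := by
    calc (∑' k, B k)^2 ≤ (∑' k, F k * G k)^2 :=
          pow_le_pow_left' (ENNReal.tsum_le_tsum hBle) 2
      _ ≤ _ := cs_tsum F G
  have hUfin : ∑' k, (U k)^2 ≠ ∞ := by rw [hUsum]; exact ENNReal.ofReal_ne_top
  have hFGfin : (∑' k, (F k)^2) * (∑' k, (G k)^2) ≠ ∞ := by
    rw [hFsum, hG2]; exact ENNReal.mul_ne_top ENNReal.ofReal_ne_top ENNReal.ofReal_ne_top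
  have hSBfin : (∑' k, B k) ≠ ∞ := by
    intro h
    apply hFGfin
    rw [← top_le_iff]
    calc (⊤:ℝ≥0∞) = (∑' k, B k)^2 := by rw [h, ENNReal.top_pow (by norm_num : 2 ≠ 0)]
      _ ≤ _ := hSB2
  -- the dominating kernel
  set T : ℤ → ℝ≥0∞ := fun k => ∑' l : ℕ, U (k - (l:ℤ)) * B l with hTdef
  have stepA : ∀ k : ℤ, (T k)^2 ≤ (∑' l, B l) * (∑' l : ℕ, (U (k - (l:ℤ)))^2 * B l) := by
    intro k
    have h := cs_tsum (fun l : ℕ => U (k - (l:ℤ)) * (B l)^((1:ℝ)/2))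
      (fun l : ℕ => (B l)^((1:ℝ)/2))
    have e1 : ∀ l : ℕ, U (k - (l:ℤ)) * (B l)^((1:ℝ)/2) * (B l)^((1:ℝ)/2)
        = U (k - (l:ℤ)) * B l := by
      intro l
      rw [mul_assoc, ← sq, rpow_half_sq]
    have e2 : ∀ l : ℕ, (U (k - (l:ℤ)) * (B l)^((1:ℝ)/2))^2 = (U (k - (l:ℤ)))^2 * B l := by
      intro l
      rw [mul_pow, rpow_half_sq]
    rw [tsum_congr e1, tsum_congr e2, tsum_congr (fun l => rpow_half_sq (B l))] at h
    rw [mul_comm] at h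
    exact h
  have stepB : ∑' k : ℤ, (T k)^2 ≤ (∑' l, B l)^2 * (∑' k, (U k)^2) := by
    calc ∑' k : ℤ, (T k)^2
        ≤ ∑' k : ℤ, (∑' l, B l) * (∑' l : ℕ, (U (k - (l:ℤ)))^2 * B l) :=
          ENNReal.tsum_le_tsum stepA
      _ = (∑' l, B l) * ∑' k : ℤ, ∑' l : ℕ, (U (k - (l:ℤ)))^2 * B l := ENNReal.tsum_mul_left
      _ = (∑' l, B l) * ∑' l : ℕ, ∑' k : ℤ, (U (k - (l:ℤ)))^2 * B l := by
          rw [ENNReal.tsum_comm]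
      _ = (∑' l, B l) * ∑' l : ℕ, (∑' k : ℤ, (U (k - (l:ℤ)))^2) * B l := by
          congr 1
          exact tsum_congr fun l => ENNReal.tsum_mul_right
      _ = (∑' l, B l) * ∑' l : ℕ, (∑' k : ℤ, (U k)^2) * B l := by
          congr 1
          refine tsum_congr fun l => ?_
          congr 1
          exact (Equiv.subRight (l:ℤ)).tsum_eq (fun k => (U k)^2)
      _ = (∑' l, B l) * ((∑' k : ℤ, (U k)^2) * ∑' l, B l) := by rw [ENNReal.tsum_mul_left]
      _ = (∑' l, B l)^2 * (∑' k, (U k)^2) := by ring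
  have hTfin : ∀ k : ℤ, T k ≠ ∞ := by
    intro k h
    have h1 : (T k)^2 ≤ ∑' k : ℤ, (T k)^2 := ENNReal.le_tsum k
    have h2 := le_trans h1 stepB
    rw [h, ENNReal.top_pow (by norm_num : 2 ≠ 0), top_le_iff] at h2
    exact ENNReal.mul_ne_top (ENNReal.pow_ne_top hSBfin) hUfin h2
  -- step C : pointwise norm bound on mulZ
  have stepC : ∀ k : ℤ, (‖mulZ u b k‖₊ : ℝ≥0∞) ≤ T k := by
    intro k
    have hTe : ∑' l : ℕ, ((‖u (k - (l:ℤ)) * b l‖₊ : ℝ≥0∞)) = T k := by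
      refine tsum_congr fun l => ?_
      rw [nnnorm_mul, ENNReal.coe_mul]
    have hsum : Summable (fun l : ℕ => ‖u (k - (l:ℤ)) * b l‖₊) := by
      rw [← ENNReal.tsum_coe_ne_top_iff_summable]
      rw [hTe]; exact hTfin k
    have hsum' : Summable (fun l : ℕ => ‖u (k - (l:ℤ)) * b l‖) := by
      simpa [coe_nnnorm] using (NNReal.summable_coe.2 hsum)
    calc (‖mulZ u b k‖₊ : ℝ≥0∞) = ENNReal.ofReal ‖mulZ u b k‖ :=
          (ofReal_norm_eq_coe_nnnorm _).symm
      _ ≤ ENNReal.ofReal (∑' l : ℕ, ‖u (k - (l:ℤ)) * b l‖) :=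
          ENNReal.ofReal_le_ofReal (norm_tsum_le_tsum_norm hsum')
      _ = ∑' l : ℕ, ENNReal.ofReal ‖u (k - (l:ℤ)) * b l‖ :=
          ENNReal.ofReal_tsum_of_nonneg (fun _ => norm_nonneg _) hsum'
      _ = T k := by
          rw [← hTe]
          exact tsum_congr fun l => ofReal_norm_eq_coe_nnnorm _
  have hA0 : (0:ℝ) ≤ ∑' k, ‖u k‖^2 := tsum_nonneg fun _ => sq_nonneg _
  have hB0 : (0:ℝ) ≤ ∑' k, ‖f k‖^2 := tsum_nonneg fun _ => sq_nonneg _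
  -- assemble the ENNReal bound
  have hmain : ∑' k : ℤ, ((‖mulZ u b k‖₊ : ℝ≥0∞))^2
      ≤ ENNReal.ofReal ((2/κ) * (∑' k, ‖u k‖^2) * (∑' k, ‖f k‖^2)) := by
    calc ∑' k : ℤ, ((‖mulZ u b k‖₊ : ℝ≥0∞))^2
        ≤ ∑' k : ℤ, (T k)^2 := by
          refine ENNReal.tsum_le_tsum fun k => ?_
          gcongr
          exact stepC k
      _ ≤ (∑' l, B l)^2 * (∑' k, (U k)^2) := stepB
      _ ≤ ((∑' k, (F k)^2) * (∑' k, (G k)^2)) * (∑' k, (U k)^2) := by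
          gcongr
      _ ≤ (ENNReal.ofReal (∑' k, ‖f k‖^2) * ENNReal.ofReal (2/κ))
            * ENNReal.ofReal (∑' k, ‖u k‖^2) := by
          rw [hFsum, hG2, hUsum]
          gcongr
      _ = ENNReal.ofReal ((2/κ) * (∑' k, ‖u k‖^2) * (∑' k, ‖f k‖^2)) := by
          rw [← ENNReal.ofReal_mul hB0,
            ← ENNReal.ofReal_mul (mul_nonneg hB0 (by positivity))]
          congr 1
          ring
  -- back to the reals
  have hmsum : Summable (fun k : ℤ => ‖mulZ u b k‖^2) := by
    have h1 : Summable (fun k : ℤ => (‖mulZ u b k‖₊)^2) := by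
      rw [← ENNReal.tsum_coe_ne_top_iff_summable]
      have hc : ∑' k : ℤ, (((‖mulZ u b k‖₊)^2 : ℝ≥0) : ℝ≥0∞)
          = ∑' k : ℤ, ((‖mulZ u b k‖₊ : ℝ≥0∞))^2 :=
        tsum_congr fun k => by push_cast; ring
      rw [hc]
      exact ne_top_of_le_ne_top ENNReal.ofReal_ne_top hmain
    simpa [coe_nnnorm] using (NNReal.summable_coe.2 h1)
  have hreal : ∑' k : ℤ, ‖mulZ u b k‖^2 ≤ (2/κ) * (∑' k, ‖u k‖^2) * (∑' k, ‖f k‖^2) := by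
    rw [← ENNReal.ofReal_le_ofReal_iff
      (mul_nonneg (mul_nonneg (by positivity) hA0) hB0)]
    rw [ENNReal.ofReal_tsum_of_nonneg (fun _ => sq_nonneg _) hmsum]
    calc ∑' k : ℤ, ENNReal.ofReal (‖mulZ u b k‖^2)
        = ∑' k : ℤ, ((‖mulZ u b k‖₊ : ℝ≥0∞))^2 := by
          refine tsum_congr fun k => ?_
          rw [ENNReal.ofReal_pow (norm_nonneg _), ofReal_norm_eq_coe_nnnorm]
      _ ≤ _ := hmain
  -- final computation with square roots
  have hκhalf : κ ^ (-(1:ℝ)/2) = (Real.sqrt κ)⁻¹ := by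
    rw [neg_div, Real.rpow_neg hκ0.le, Real.sqrt_eq_rpow]
  have hrw : Real.sqrt 3 * κ ^ (-(1 : ℝ) / 2) * l2norm u * l2norm f
      = Real.sqrt ((3/κ) * (∑' k, ‖u k‖^2) * (∑' k, ‖f k‖^2)) := by
    unfold l2norm
    rw [hκhalf, Real.sqrt_mul (mul_nonneg (by positivity) hA0),
      Real.sqrt_mul (by positivity : (0:ℝ) ≤ 3/κ), div_eq_mul_inv (3:ℝ) κ,
      Real.sqrt_mul (by norm_num : (0:ℝ) ≤ 3), Real.sqrt_inv]
  rw [hrw]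
  unfold l2norm
  apply Real.sqrt_le_sqrt
  calc ∑' k : ℤ, ‖mulZ u b k‖^2 ≤ (2/κ) * (∑' k, ‖u k‖^2) * (∑' k, ‖f k‖^2) := hreal
    _ ≤ (3/κ) * (∑' k, ‖u k‖^2) * (∑' k, ‖f k‖^2) := by
        have h23 : (2:ℝ)/κ ≤ 3/κ := (div_le_div_iff_of_pos_right hκ0).2 (by norm_num)
        exact mul_le_mul_of_nonneg_right (mul_le_mul_of_nonneg_right h23 hA0) hB0
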